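/- Let X be a real p × n matrix, let λ > 0 and ρ > 0, let M be a real n × n matrix and δ ∈ ℝⁿ, and define ψ on real n × n matrices by ψ(A) = (λ/2)‖X − XA‖_F² + (ρ/2)‖Aᵀ𝟙 − 𝟙‖₂² + (ρ/2)‖A − M‖_F² + δᵀ(Aᵀ𝟙 − 𝟙). Then the matrix λXᵀX + ρI + ρ𝟙𝟙ᵀ is positive definite (hence invertible), ψ is strictly convex with a unique minimizer A*, and A* is characterized by the normal equations (λXᵀX + ρI + ρ𝟙𝟙ᵀ)A* = λXᵀX + ρ(𝟙𝟙ᵀ + M) − 𝟙δᵀ. -/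

import Mathlib

open Matrix

theorem stmt16aux_HmulVec {n p : ℕ} (X : Matrix (Fin p) (Fin n) ℝ) (lam ρ : ℝ) (v : Fin n → ℝ) :
    (lam • (Xᵀ * X) + ρ • (1 : Matrix (Fin n) (Fin n) ℝ)
      + ρ • vecMulVec (1 : Fin n → ℝ) 1) *ᵥ v
    = lam • (Xᵀ *ᵥ (X *ᵥ v)) + ρ • v + ρ • (((1 : Fin n → ℝ) ⬝ᵥ v) • (1 : Fin n → ℝ)) := by
  funext i
  simp [add_mulVec, smul_mulVec, one_mulVec, mulVec_mulVec, mulVec, vecMulVec_apply,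
    dotProduct, Finset.mul_sum, Finset.sum_add_distrib, mul_add, add_mul, one_apply, mul_ite,
    Finset.sum_ite_eq, mul_comm]
  exact Finset.sum_congr rfl fun k _ => by ring

theorem stmt16aux_posdef {n p : ℕ} (X : Matrix (Fin p) (Fin n) ℝ) (lam ρ : ℝ)
    (hlam : 0 < lam) (hρ : 0 < ρ) :
    (lam • (Xᵀ * X) + ρ • (1 : Matrix (Fin n) (Fin n) ℝ)
      + ρ • vecMulVec (1 : Fin n → ℝ) 1).PosDef := by
  rw [posDef_iff_dotProduct_mulVec]
  constructor
  · unfold Matrix.IsHermitian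
    ext i j
    simp [conjTranspose_apply, mul_apply, vecMulVec_apply, one_apply, mul_comm]
    rw [eq_comm]
    exact if_congr eq_comm rfl rfl
  · intro x hx
    have hst : star x = x := by funext i; simp
    rw [hst, stmt16aux_HmulVec]
    have hXx : x ⬝ᵥ (lam • (Xᵀ *ᵥ (X *ᵥ x))) = lam * ((X *ᵥ x) ⬝ᵥ (X *ᵥ x)) := by
      rw [dotProduct_smul, dotProduct_mulVec, vecMul_transpose]; rfl
    rw [dotProduct_add, dotProduct_add, hXx, dotProduct_smul, dotProduct_smul, smul_eq_mul,
      smul_eq_mul, dotProduct_smul, smul_eq_mul, dotProduct_comm x (1 : Fin n → ℝ)]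
    have h1 : 0 ≤ (X *ᵥ x) ⬝ᵥ (X *ᵥ x) := Finset.sum_nonneg fun i _ => mul_self_nonneg _
    have h2 : 0 < x ⬝ᵥ x := by
      obtain ⟨i, hi⟩ := Function.ne_iff.mp hx
      exact Finset.sum_pos' (fun k _ => mul_self_nonneg _)
        ⟨i, Finset.mem_univ i, mul_self_pos.mpr hi⟩
    nlinarith [mul_self_nonneg ((1 : Fin n → ℝ) ⬝ᵥ x)]

theorem stmt16aux_phi_diff {n p : ℕ} (X : Matrix (Fin p) (Fin n) ℝ) (lam ρ : ℝ)
    (x : Fin p → ℝ) (m : Fin n → ℝ) (d : ℝ) (a b : Fin n → ℝ) :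
    ((lam/2) * ((x - X *ᵥ a) ⬝ᵥ (x - X *ᵥ a)) + (ρ/2) * (((1 : Fin n → ℝ) ⬝ᵥ a) - 1)^2
      + (ρ/2) * ((a - m) ⬝ᵥ (a - m)) + d * (((1 : Fin n → ℝ) ⬝ᵥ a) - 1))
    - ((lam/2) * ((x - X *ᵥ b) ⬝ᵥ (x - X *ᵥ b)) + (ρ/2) * (((1 : Fin n → ℝ) ⬝ᵥ b) - 1)^2
      + (ρ/2) * ((b - m) ⬝ᵥ (b - m)) + d * (((1 : Fin n → ℝ) ⬝ᵥ b) - 1))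
    = (1/2) * ((a - b) ⬝ᵥ ((lam • (Xᵀ * X) + ρ • (1 : Matrix (Fin n) (Fin n) ℝ)
        + ρ • vecMulVec (1 : Fin n → ℝ) 1) *ᵥ (a - b)))
      + (((lam • (Xᵀ * X) + ρ • (1 : Matrix (Fin n) (Fin n) ℝ)
            + ρ • vecMulVec (1 : Fin n → ℝ) 1) *ᵥ b)
          - (lam • (Xᵀ *ᵥ x) + ρ • (1 : Fin n → ℝ) + ρ • m - d • (1 : Fin n → ℝ)))
        ⬝ᵥ (a - b) := by
  rw [stmt16aux_HmulVec, stmt16aux_HmulVec]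
  have hX : ∀ (u : Fin n → ℝ) (w : Fin p → ℝ), u ⬝ᵥ (Xᵀ *ᵥ w) = (X *ᵥ u) ⬝ᵥ w := by
    intro u w; rw [dotProduct_mulVec, vecMul_transpose]
  have hX' : ∀ (w : Fin p → ℝ) (u : Fin n → ℝ), (Xᵀ *ᵥ w) ⬝ᵥ u = w ⬝ᵥ (X *ᵥ u) := by
    intro w u; rw [mulVec_transpose, ← dotProduct_mulVec]
  simp only [mulVec_sub, dotProduct_sub, sub_dotProduct, dotProduct_add, add_dotProduct,
    dotProduct_smul, smul_dotProduct, smul_eq_mul, hX, hX']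
  rw [dotProduct_comm (X *ᵥ b) (X *ᵥ a), dotProduct_comm b a, dotProduct_comm m a,
    dotProduct_comm x (X *ᵥ b), dotProduct_comm b (1:Fin n → ℝ), dotProduct_comm m b,
    dotProduct_comm x (X *ᵥ a), dotProduct_comm a (1:Fin n → ℝ)]
  ring

theorem stmt16aux_psi_col {n p : ℕ} (X : Matrix (Fin p) (Fin n) ℝ) (lam ρ : ℝ)
    (M : Matrix (Fin n) (Fin n) ℝ) (δ : Fin n → ℝ) (A : Matrix (Fin n) (Fin n) ℝ) :
    (lam / 2) * (∑ i, ∑ j, ((X - X * A) i j)^2)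
      + (ρ / 2) * (∑ j, (∑ i, A i j - 1)^2)
      + (ρ / 2) * (∑ i, ∑ j, ((A - M) i j)^2)
      + ∑ j, δ j * (∑ i, A i j - 1)
    = ∑ j, ((lam/2) * (((fun i => X i j) - X *ᵥ (fun i => A i j)) ⬝ᵥ
              ((fun i => X i j) - X *ᵥ (fun i => A i j)))
        + (ρ/2) * (((1 : Fin n → ℝ) ⬝ᵥ (fun i => A i j)) - 1)^2
        + (ρ/2) * (((fun i => A i j) - (fun i => M i j)) ⬝ᵥ
              ((fun i => A i j) - (fun i => M i j)))
        + δ j * (((1 : Fin n → ℝ) ⬝ᵥ (fun i => A i j)) - 1)) := by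
  rw [Finset.sum_comm (s := Finset.univ) (t := Finset.univ)
      (f := fun i j => ((X - X * A) i j)^2),
    Finset.sum_comm (s := Finset.univ) (t := Finset.univ)
      (f := fun i j => ((A - M) i j)^2)]
  simp only [Finset.mul_sum, ← Finset.sum_add_distrib]
  refine Finset.sum_congr rfl fun j _ => ?_
  simp [dotProduct, mulVec, Matrix.sub_apply, mul_apply, Pi.sub_apply, Pi.one_apply, pow_two]
  rw [Finset.mul_sum, Finset.mul_sum]

set_option maxHeartbeats 1000000 in
theorem stmt16 (n p : ℕ) (X : Matrix (Fin p) (Fin n) ℝ)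
    (lam ρ : ℝ) (hlam : 0 < lam) (hρ : 0 < ρ)
    (M : Matrix (Fin n) (Fin n) ℝ) (δ : Fin n → ℝ)
    (ψ : Matrix (Fin n) (Fin n) ℝ → ℝ)
    (hψ : ψ = fun A =>
      (lam / 2) * (∑ i, ∑ j, ((X - X * A) i j)^2)
        + (ρ / 2) * (∑ j, (∑ i, A i j - 1)^2)
        + (ρ / 2) * (∑ i, ∑ j, ((A - M) i j)^2)
        + ∑ j, δ j * (∑ i, A i j - 1)) :
    (lam • (Xᵀ * X) + ρ • (1 : Matrix (Fin n) (Fin n) ℝ)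
        + ρ • vecMulVec (1 : Fin n → ℝ) 1).PosDef ∧
    IsUnit (lam • (Xᵀ * X) + ρ • (1 : Matrix (Fin n) (Fin n) ℝ)
        + ρ • vecMulVec (1 : Fin n → ℝ) 1) ∧
    StrictConvexOn ℝ Set.univ ψ ∧
    (∃! Astar : Matrix (Fin n) (Fin n) ℝ, ∀ A, ψ Astar ≤ ψ A) ∧
    (∀ Astar : Matrix (Fin n) (Fin n) ℝ,
      (∀ A, ψ Astar ≤ ψ A) ↔
        (lam • (Xᵀ * X) + ρ • (1 : Matrix (Fin n) (Fin n) ℝ)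
            + ρ • vecMulVec (1 : Fin n → ℝ) 1) * Astar
          = lam • (Xᵀ * X) + ρ • (vecMulVec (1 : Fin n → ℝ) 1 + M)
            - vecMulVec (1 : Fin n → ℝ) δ) := by
  set H : Matrix (Fin n) (Fin n) ℝ :=
    lam • (Xᵀ * X) + ρ • (1 : Matrix (Fin n) (Fin n) ℝ)
      + ρ • vecMulVec (1 : Fin n → ℝ) 1 with hH
  set Bm : Matrix (Fin n) (Fin n) ℝ :=
    lam • (Xᵀ * X) + ρ • (vecMulVec (1 : Fin n → ℝ) 1 + M)
      - vecMulVec (1 : Fin n → ℝ) δ with hBm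
  have hpd : H.PosDef := stmt16aux_posdef X lam ρ hlam hρ
  have hunit : IsUnit H := (Matrix.isUnit_iff_isUnit_det H).mpr
    (isUnit_iff_ne_zero.mpr (ne_of_gt hpd.det_pos))
  -- quadratic form over matrices
  set Q : Matrix (Fin n) (Fin n) ℝ → ℝ :=
    fun D => ∑ j, (fun i => D i j) ⬝ᵥ (H *ᵥ (fun i => D i j)) with hQ
  have hQnonneg : ∀ D, 0 ≤ Q D := by
    intro D
    refine Finset.sum_nonneg fun j _ => ?_
    have := hpd.posSemidef.dotProduct_mulVec_nonneg (fun i => D i j)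
    simpa [star_trivial] using this
  have hQpos : ∀ D, D ≠ 0 → 0 < Q D := by
    intro D hD
    obtain ⟨i0, j0, hij⟩ : ∃ i j, D i j ≠ 0 := by
      by_contra h
      push_neg at h
      exact hD (by ext i j; simpa using h i j)
    refine Finset.sum_pos' (fun j _ => by
        simpa [star_trivial] using hpd.posSemidef.dotProduct_mulVec_nonneg (fun i => D i j))
      ⟨j0, Finset.mem_univ j0, ?_⟩
    have hcol : (fun i => D i j0) ≠ 0 := by
      intro h
      exact hij (by simpa using congrFun h i0)
    simpa [star_trivial] using hpd.dotProduct_mulVec_pos hcol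
  have hQsmul : ∀ (c : ℝ) D, Q (c • D) = c^2 * Q D := by
    intro c D
    rw [hQ, Finset.mul_sum]
    refine Finset.sum_congr rfl fun j _ => ?_
    have h1 : (fun i => (c • D) i j) = c • (fun i => D i j) := by
      funext i; simp
    rw [h1, mulVec_smul, smul_dotProduct, dotProduct_smul, smul_eq_mul, smul_eq_mul]
    ring
  -- the key identity
  have key : ∀ A B : Matrix (Fin n) (Fin n) ℝ,
      ψ A - ψ B = (1/2) * Q (A - B)
        + ∑ j, ((fun i => (H * B - Bm) i j) ⬝ᵥ (fun i => (A - B) i j)) := by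
    intro A B
    rw [hψ]
    simp only []
    rw [stmt16aux_psi_col X lam ρ M δ A, stmt16aux_psi_col X lam ρ M δ B,
      ← Finset.sum_sub_distrib, hQ, Finset.mul_sum, ← Finset.sum_add_distrib]
    refine Finset.sum_congr rfl fun j _ => ?_
    have hcol1 : (fun i => (A - B) i j) = (fun i => A i j) - (fun i => B i j) := by
      funext i; simp
    have hcol2 : (fun i => (H * B - Bm) i j)
        = (H *ᵥ (fun i => B i j))
          - (lam • (Xᵀ *ᵥ (fun i => X i j)) + ρ • (1 : Fin n → ℝ)
              + ρ • (fun i => M i j) - δ j • (1 : Fin n → ℝ)) := by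
      funext i
      simp [hH, hBm, mul_apply, mulVec, dotProduct, vecMulVec_apply, Matrix.add_apply, Matrix.sub_apply,
        Matrix.smul_apply, one_apply, transpose_apply, Finset.mul_sum, smul_eq_mul]
      ring
    rw [hcol1, hcol2]
    exact stmt16aux_phi_diff X lam ρ (fun i => X i j) (fun i => M i j) (δ j)
      (fun i => A i j) (fun i => B i j)
  -- linear term vanishes for solutions of the normal equations
  have hlin0 : ∀ B, H * B = Bm → ∀ A,
      (∑ j, ((fun i => (H * B - Bm) i j) ⬝ᵥ (fun i => (A - B) i j))) = 0 := by
    intro B hB A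
    refine Finset.sum_eq_zero fun j _ => ?_
    have : (fun i => (H * B - Bm) i j) = 0 := by
      funext i; simp [hB]
    rw [this, zero_dotProduct]
  -- a solution of the normal equations is the strict minimizer
  have hmin_of_sol : ∀ B, H * B = Bm → (∀ A, ψ B ≤ ψ A) := by
    intro B hB A
    have := key A B
    rw [hlin0 B hB A] at this
    nlinarith [hQnonneg (A - B)]
  have hstrict_of_sol : ∀ B, H * B = Bm → ∀ A, A ≠ B → ψ B < ψ A := by
    intro B hB A hAB
    have := key A B
    rw [hlin0 B hB A] at this
    have hpos : 0 < Q (A - B) := hQpos _ (sub_ne_zero.mpr hAB)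
    nlinarith
  -- the canonical solution
  have hdet : IsUnit H.det := (Matrix.isUnit_iff_isUnit_det H).mp hunit
  set A0 : Matrix (Fin n) (Fin n) ℝ := H⁻¹ * Bm with hA0
  have hA0sol : H * A0 = Bm := by
    rw [hA0, ← mul_assoc, Matrix.mul_nonsing_inv H hdet, one_mul]
  -- characterization of minimizers
  have hchar : ∀ C : Matrix (Fin n) (Fin n) ℝ, (∀ A, ψ C ≤ ψ A) ↔ H * C = Bm := by
    intro C
    constructor
    · intro hC
      by_contra hne
      have hCA0 : C ≠ A0 := fun h => hne (h ▸ hA0sol)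
      have h1 : ψ A0 < ψ C := hstrict_of_sol A0 hA0sol C hCA0
      exact absurd (hC A0) (not_le.mpr h1)
    · exact hmin_of_sol C
  refine ⟨hpd, hunit, ?_, ?_, hchar⟩
  · -- strict convexity
    refine ⟨convex_univ, ?_⟩
    intro A _ B _ hAB t s ht hs hts
    set C : Matrix (Fin n) (Fin n) ℝ := t • A + s • B with hC
    have ht' : t = 1 - s := by linarith
    have hAC : A - C = s • (A - B) := by
      rw [hC, ht']; ext i j
      simp [Matrix.sub_apply, Matrix.add_apply, Matrix.smul_apply, smul_eq_mul]
      ring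
    have hBC : B - C = (-t) • (A - B) := by
      rw [hC, ht']; ext i j
      simp [Matrix.sub_apply, Matrix.add_apply, Matrix.smul_apply, smul_eq_mul]
      ring
    have e1 := key A C
    have e2 := key B C
    set l1 : ℝ := ∑ j, ((fun i => (H * C - Bm) i j) ⬝ᵥ (fun i => (A - C) i j)) with hl1
    set l2 : ℝ := ∑ j, ((fun i => (H * C - Bm) i j) ⬝ᵥ (fun i => (B - C) i j)) with hl2
    have hlin : t * l1 + s * l2 = 0 := by
      rw [hl1, hl2, Finset.mul_sum, Finset.mul_sum, ← Finset.sum_add_distrib]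
      refine Finset.sum_eq_zero fun j _ => ?_
      have hv : ∀ D : Matrix (Fin n) (Fin n) ℝ, ∀ c : ℝ,
          c * ((fun i => (H * C - Bm) i j) ⬝ᵥ (fun i => D i j))
          = (fun i => (H * C - Bm) i j) ⬝ᵥ (c • (fun i => D i j)) := by
        intro D c; rw [dotProduct_smul, smul_eq_mul]
      rw [hv, hv, ← dotProduct_add]
      have : (t • (fun i => (A - C) i j) + s • (fun i => (B - C) i j)) = (0 : Fin n → ℝ) := by
        funext i
        simp [hC, Matrix.sub_apply, Matrix.add_apply, Matrix.smul_apply, smul_eq_mul]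
        linear_combination (-(t * A i j) - s * B i j) * hts
      rw [this, dotProduct_zero]
    have hq1 : Q (A - C) = s^2 * Q (A - B) := by rw [hAC, hQsmul]
    have hq2 : Q (B - C) = t^2 * Q (A - B) := by
      rw [hBC, hQsmul]; ring_nf
    have hQAB : 0 < Q (A - B) := hQpos _ (sub_ne_zero.mpr hAB)
    have hcomb : t * (ψ A - ψ C) + s * (ψ B - ψ C)
        = (1/2) * (t * s^2 + s * t^2) * Q (A - B) + (t * l1 + s * l2) := by
      rw [e1, e2, hq1, hq2]; ring
    rw [hlin] at hcomb
    have hfin : t * (ψ A - ψ C) + s * (ψ B - ψ C) = (1/2) * t * s * Q (A - B) := by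
      rw [hcomb]; linear_combination ((1/2) * t * s * Q (A - B)) * hts
    have hpos : 0 < (1/2) * t * s * Q (A - B) := by positivity
    have hCψ : t * ψ C + s * ψ C = ψ C := by linear_combination (ψ C) * hts
    simp only [smul_eq_mul]
    nlinarith
  · -- existence and uniqueness of the minimizer
    refine ⟨A0, hmin_of_sol A0 hA0sol, fun y hy => ?_⟩
    have hysol : H * y = Bm := (hchar y).mp hy
    have : H * y = H * A0 := by rw [hysol, hA0sol]
    calc y = (H⁻¹ * H) * y := by rw [Matrix.nonsing_inv_mul H hdet, one_mul]
    _ = H⁻¹ * (H * A0) := by rw [mul_assoc, this]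
    _ = (H⁻¹ * H) * A0 := by rw [mul_assoc]
    _ = A0 := by rw [Matrix.nonsing_inv_mul H hdet, one_mul]
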